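/- Every polynomial in 𝓕 is a D0L-growth function; that is, for every real polynomial F such that F(n) is a positive integer for every natural number n, there exist a finite alphabet A, a monoid morphism σ of the free monoid A* into itself, and a word w ∈ A* such that the length of σⁿ(w) equals F(n) for every n ∈ ℕ. -/

import Mathlib

open Polynomial Finset Filter


/-- Hockey stick, summing over the first index. -/
lemma hockey1 (i : ℕ) : ∀ n : ℕ, ∑ j ∈ range (n+1), (j+i).choose i = (n+i+1).choose (i+1) := by
  intro n
  induction n with
  | zero => simp
  | succ n ih =>
    rw [Finset.sum_range_succ, ih, show n+1+i = n+i+1 from by omega]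
    have hp := Nat.choose_succ_succ' (n+i+1) i
    omega

/-- Hockey stick, summing over the second index. -/
lemma hockey2 (t : ℕ) : ∀ s : ℕ, ∑ k ∈ range (s+1), (t+k).choose k = (t+1+s).choose s := by
  intro s
  induction s with
  | zero => simp
  | succ s ih =>
    rw [Finset.sum_range_succ, ih, show t+(s+1) = t+1+s from by omega,
      show t+1+(s+1) = t+1+s+1 from by omega]
    have hp := Nat.choose_succ_succ' (t+1+s) s
    omega

lemma telescope (g : ℕ → ℤ) (K : ℕ) : ∀ n : ℕ,
    g (n + 1 + K) = g K + ∑ j ∈ range (n+1), (g (j+K+1) - g (j+K)) := by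
  intro n
  induction n with
  | zero => simp [add_comm]
  | succ n ih =>
    rw [Finset.sum_range_succ, ← add_assoc, ← ih, show n+1+1+K = n+1+K+1 from by omega]
    omega

lemma const_seq (g : ℕ → ℤ) (h : ∀ n, g (n+1) = g n) : ∀ n, g n = g 0 := by
  intro n; induction n with
  | zero => rfl
  | succ n ih => rw [h, ih]

lemma evpos (G : Polynomial ℝ) (hG0 : G ≠ 0) (h : 0 < G.leadingCoeff) :
    ∃ M : ℕ, ∀ n : ℕ, 0 < G.eval (((n + M : ℕ)) : ℝ) := by
  rcases le_or_gt G.degree 0 with hd | hd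
  · refine ⟨0, fun n => ?_⟩
    have hnd : G.natDegree = 0 :=
      le_antisymm (Polynomial.natDegree_le_iff_degree_le.mpr (by exact_mod_cast hd)) (Nat.zero_le _)
    have hC : G = C (G.coeff 0) := Polynomial.eq_C_of_natDegree_le_zero hnd.le
    have hlc : G.leadingCoeff = G.coeff 0 := by rw [Polynomial.leadingCoeff, hnd]
    rw [hlc] at h
    conv_lhs => rw [show (0:ℝ) = 0 from rfl]
    rw [hC, Polynomial.eval_C]
    exact h
  · have ht := Polynomial.tendsto_atTop_of_leadingCoeff_nonneg G hd h.le
    have h2 := (ht.eventually_gt_atTop 0)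
    rw [Filter.eventually_atTop] at h2
    obtain ⟨M, hM⟩ := h2
    refine ⟨⌈M⌉₊, fun n => hM _ ?_⟩
    calc M ≤ (⌈M⌉₊ : ℝ) := Nat.le_ceil M
    _ ≤ ((n + ⌈M⌉₊ : ℕ):ℝ) := by push_cast; linarith [Nat.cast_nonneg (α := ℝ) n]

/-- Part 1: shifted nonnegative binomial representation. -/
lemma part1 : ∀ (d : ℕ) (F : Polynomial ℝ) (g : ℕ → ℤ), F.natDegree ≤ d →
    (∀ n : ℕ, F.eval (n:ℝ) = (g n : ℝ)) → (∀ n, 1 ≤ g n) →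
    ∃ (N D : ℕ) (m : ℕ → ℕ), 1 ≤ N ∧
      ∀ n : ℕ, g (n + N) = ∑ i ∈ range (D+1), (m i : ℤ) * ((n+i).choose i : ℤ) := by
  intro d
  induction d with
  | zero =>
    intro F g hdeg heval hpos
    have hc : ∀ n, g (n+1) = g n := by
      intro n
      have hF : F = Polynomial.C (F.coeff 0) := Polynomial.eq_C_of_natDegree_le_zero hdeg
      have h1 := heval (n+1); have h2 := heval n
      rw [hF] at h1 h2
      simp only [Polynomial.eval_C] at h1 h2
      exact_mod_cast h1.symm.trans h2
    refine ⟨1, 0, fun _ => (g 0).toNat, le_refl 1, fun n => ?_⟩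
    rw [const_seq g hc (n+1)]
    simp [Int.toNat_of_nonneg (by linarith [hpos 0] : (0:ℤ) ≤ g 0)]
  | succ d ih =>
    intro F g hdeg heval hpos
    set G : Polynomial ℝ := F.comp (X + C 1) - F with hGdef
    have hGeval : ∀ x : ℝ, G.eval x = F.eval (x+1) - F.eval x := by
      intro x; simp [hGdef]
    have hGint : ∀ n : ℕ, G.eval ((n:ℝ)) = ((g (n+1) - g n : ℤ) : ℝ) := by
      intro n
      rw [hGeval]
      have h1 := heval (n+1); have h2 := heval n
      push_cast at h1 ⊢
      rw [h1, h2]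
    by_cases hG0 : G = 0
    · -- constant case
      have hc : ∀ n, g (n+1) = g n := by
        intro n
        have h := hGint n
        rw [hG0] at h
        simp only [Polynomial.eval_zero] at h
        have h' : g (n+1) - g n = 0 := by exact_mod_cast h.symm
        omega
      refine ⟨1, 0, fun _ => (g 0).toNat, le_refl 1, fun n => ?_⟩
      rw [const_seq g hc (n+1)]
      simp [Int.toNat_of_nonneg (by linarith [hpos 0] : (0:ℤ) ≤ g 0)]
    · -- G ≠ 0
      have hF0 : F ≠ 0 := by
        intro h
        have h0 := heval 0
        rw [h] at h0; simp at h0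
        have h1 := hpos 0
        have : (g 0 : ℝ) ≥ 1 := by exact_mod_cast h1
        linarith [h0]
      have hXC : (X + C (1:ℝ)).natDegree = 1 := Polynomial.natDegree_X_add_C 1
      have hFdeg : F.natDegree ≠ 0 := by
        intro h
        have hF : F = Polynomial.C (F.coeff 0) := Polynomial.eq_C_of_natDegree_le_zero h.le
        apply hG0
        rw [hGdef, hF]; simp
      have hlc : (F.comp (X + C 1)).leadingCoeff = F.leadingCoeff := by
        rw [Polynomial.leadingCoeff_comp (by rw [hXC]; exact one_ne_zero),
          (Polynomial.monic_X_add_C (1:ℝ)).leadingCoeff, one_pow, mul_one]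
      have hcompne : F.comp (X + C 1) ≠ 0 := by
        intro h
        apply hF0
        have h2 := hlc
        rw [h, Polynomial.leadingCoeff_zero] at h2
        exact Polynomial.leadingCoeff_eq_zero.mp h2.symm
      have hdegeq : (F.comp (X + C 1)).degree = F.degree := by
        rw [Polynomial.degree_eq_natDegree hcompne, Polynomial.degree_eq_natDegree hF0,
          Polynomial.natDegree_comp, hXC, mul_one]
      have hdG : G.natDegree < F.natDegree := by
        have hsub := Polynomial.degree_sub_lt hdegeq hcompne hlc
        rw [← hGdef, hdegeq] at hsub
        exact Polynomial.natDegree_lt_natDegree hG0 hsub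
      -- eventual positivity of the difference
      have key : ∃ M : ℕ, ∀ n : ℕ, 1 ≤ g (n + M + 1) - g (n + M) := by
        rcases lt_trichotomy G.leadingCoeff 0 with hneg | hz | hposl
        · exfalso
          obtain ⟨M, hM⟩ := evpos (-G) (neg_ne_zero.mpr hG0)
            (by rw [Polynomial.leadingCoeff_neg]; linarith)
          have hdec : ∀ n : ℕ, g (n+M+1) ≤ g (n+M) - 1 := by
            intro n
            have h3 := hM n
            rw [Polynomial.eval_neg, hGint (n+M)] at h3
            have h4 : ((g (n+M+1) - g (n+M) : ℤ):ℝ) < 0 := by linarith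
            have h5 : (g (n+M+1) - g (n+M) : ℤ) < 0 := by exact_mod_cast h4
            omega
          have hlow : ∀ k : ℕ, g (k + M) ≤ g M - k := by
            intro k; induction k with
            | zero => simp
            | succ k ihk =>
              have h6 := hdec k
              rw [show k+1+M = k+M+1 from by omega]
              push_cast
              omega
          have h1 := hpos ((g M).toNat + M)
          have h2 := hlow ((g M).toNat)
          have h3 := hpos M
          omega
        · exact absurd (Polynomial.leadingCoeff_eq_zero.mp hz) hG0
        · obtain ⟨M, hM⟩ := evpos G hG0 hposl
          refine ⟨M, fun n => ?_⟩
          have h3 := hM n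
          rw [hGint (n+M)] at h3
          have h4 : (0:ℤ) < g (n+M+1) - g (n+M) := by exact_mod_cast h3
          omega
      obtain ⟨M, hM⟩ := key
      -- apply IH to the shifted difference polynomial
      have hGM : (G.comp (X + C (M:ℝ))).natDegree ≤ d := by
        rw [Polynomial.natDegree_comp, Polynomial.natDegree_X_add_C, mul_one]
        omega
      have heval' : ∀ n : ℕ, (G.comp (X + C (M:ℝ))).eval (n:ℝ)
          = ((g (n+M+1) - g (n+M) : ℤ) : ℝ) := by
        intro n
        rw [Polynomial.eval_comp]
        simp only [Polynomial.eval_add, Polynomial.eval_X, Polynomial.eval_C]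
        rw [show ((n:ℝ) + M) = ((n+M : ℕ) : ℝ) from by push_cast; ring, hGint (n+M)]
      obtain ⟨N', D', m', hN', hrep⟩ := ih (G.comp (X + C (M:ℝ)))
        (fun n => g (n+M+1) - g (n+M)) hGM heval' hM
      refine ⟨M + N' + 1, D' + 1,
        fun i => if i = 0 then (g (M+N')).toNat else m' (i-1), by omega, fun n => ?_⟩
      have htel := telescope g (M + N') n
      rw [show n + (M + N' + 1) = n + 1 + (M + N') from by omega, htel]
      have hterm : ∀ j : ℕ, g (j+(M+N')+1) - g (j+(M+N'))
          = ∑ i ∈ range (D'+1), (m' i : ℤ) * ((j+i).choose i : ℤ) := by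
        intro j
        have := hrep j
        rw [show j+N'+M+1 = j+(M+N')+1 from by omega,
          show j+N'+M = j+(M+N') from by omega] at this
        exact this
      calc g (M+N') + ∑ j ∈ range (n+1), (g (j+(M+N')+1) - g (j+(M+N')))
          = g (M+N') + ∑ j ∈ range (n+1), ∑ i ∈ range (D'+1),
              (m' i : ℤ) * ((j+i).choose i : ℤ) := by
            congr 1; exact Finset.sum_congr rfl (fun j _ => hterm j)
        _ = g (M+N') + ∑ i ∈ range (D'+1),
              (m' i : ℤ) * ((n+i+1).choose (i+1) : ℤ) := by
            congr 1
            rw [Finset.sum_comm]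
            refine Finset.sum_congr rfl (fun i _ => ?_)
            rw [← Finset.mul_sum, ← Nat.cast_sum]
            congr 1
            exact_mod_cast hockey1 i n
        _ = ∑ i ∈ range (D'+1+1),
              ((if i = 0 then (g (M+N')).toNat else m' (i-1) : ℕ) : ℤ)
                * ((n+i).choose i : ℤ) := by
            have h0 : (0:ℤ) ≤ g (M+N') := by linarith [hpos (M+N')]
            have hsum2 : (∑ i ∈ range (D'+1),
                ((if i+1 = 0 then (g (M+N')).toNat else m' (i+1-1) : ℕ) : ℤ)
                  * (((n+(i+1)).choose (i+1) : ℕ) : ℤ))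
                = ∑ i ∈ range (D'+1), (m' i : ℤ) * ((n+i+1).choose (i+1) : ℤ) := by
              refine Finset.sum_congr rfl (fun i _ => ?_)
              simp [show n+(i+1) = n+i+1 from by omega]
            conv_rhs => rw [Finset.sum_range_succ']
            rw [hsum2, add_comm]
            simp [Int.toNat_of_nonneg h0]


/-- Hockey stick, summing over the second index. -/
lemma hockey2' (t : ℕ) : ∀ s : ℕ, ∑ k ∈ range (s+1), (t+k).choose k = (t+1+s).choose s := by
  intro s
  induction s with
  | zero => simp
  | succ s ih =>
    rw [Finset.sum_range_succ, ih, show t+(s+1) = t+1+s from by omega,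
      show t+1+(s+1) = t+1+s+1 from by omega]
    have hp := Nat.choose_succ_succ' (t+1+s) s
    omega

section General

variable {α : Type*} (σ : FreeMonoid α →* FreeMonoid α)

lemma iter_one (n : ℕ) : (⇑σ)^[n] 1 = 1 := by
  induction n with
  | zero => rfl
  | succ n ih => rw [Function.iterate_succ_apply, map_one, ih]

lemma iter_mul (n : ℕ) (u v : FreeMonoid α) :
    (⇑σ)^[n] (u * v) = (⇑σ)^[n] u * (⇑σ)^[n] v := by
  induction n generalizing u v with
  | zero => rfl
  | succ n ih => rw [Function.iterate_succ_apply, map_mul, Function.iterate_succ_apply,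
      Function.iterate_succ_apply, ih]

lemma len_iter_ofList (n : ℕ) : ∀ l : List α,
    ((⇑σ)^[n] (FreeMonoid.ofList l)).length
      = (l.map (fun x => ((⇑σ)^[n] (FreeMonoid.of x)).length)).sum := by
  intro l
  induction l with
  | nil =>
    rw [show FreeMonoid.ofList ([] : List α) = 1 from rfl, iter_one]
    simp [FreeMonoid.length_one]
  | cons x l ih =>
    rw [FreeMonoid.ofList_cons, iter_mul, FreeMonoid.length_mul, ih]
    simp

lemma list_range_sum (h : ℕ → ℕ) : ∀ k : ℕ,
    ((List.range k).map h).sum = ∑ i ∈ range k, h i := by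
  intro k
  induction k with
  | zero => simp
  | succ k ih => rw [List.range_succ, List.map_append, List.sum_append,
      Finset.sum_range_succ, ih]; simp

end General

section Constr

variable (N d : ℕ) (f m : ℕ → ℕ)

abbrev Alph : Type := Fin N ⊕ Fin (d+1) ⊕ Unit

def aL (j : ℕ) : Alph N d := Sum.inr (Sum.inl ⟨min j d, by omega⟩)

def er : Alph N d := Sum.inr (Sum.inr ())

def coreL : List (Alph N d) :=
  (List.range (d+1)).flatMap (fun i => List.replicate (m i) (aL N d i))

def phi : Alph N d → FreeMonoid (Alph N d)
  | Sum.inl j => if h : (j:ℕ)+1 < N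
      then FreeMonoid.ofList (Sum.inl ⟨(j:ℕ)+1, h⟩ ::
        List.replicate (f ((j:ℕ)+1) - 1) (er N d))
      else FreeMonoid.ofList (coreL N d m)
  | Sum.inr (Sum.inl i) => FreeMonoid.ofList ((List.range ((i:ℕ)+1)).map (aL N d))
  | Sum.inr (Sum.inr _) => 1

def sig : FreeMonoid (Alph N d) →* FreeMonoid (Alph N d) := FreeMonoid.lift (phi N d f m)

lemma sig_of (x : Alph N d) : sig N d f m (FreeMonoid.of x) = phi N d f m x :=
  FreeMonoid.lift_eval_of _ _

lemma len_a : ∀ n : ℕ, ∀ j : ℕ, j ≤ d →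
    ((⇑(sig N d f m))^[n] (FreeMonoid.of (aL N d j))).length = (n+j).choose j := by
  intro n
  induction n with
  | zero =>
    intro j hj
    simp [FreeMonoid.length_of, Nat.choose_self]
  | succ n ihn =>
    intro j hj
    rw [Function.iterate_succ_apply, sig_of]
    have hphi : phi N d f m (aL N d j)
        = FreeMonoid.ofList ((List.range (j+1)).map (aL N d)) := by
      simp [phi, aL, min_eq_left hj]
    rw [hphi, len_iter_ofList, List.map_map, list_range_sum]
    have : ∀ k ∈ range (j+1),
        ((fun x => ((⇑(sig N d f m))^[n] (FreeMonoid.of x)).length) ∘ (aL N d)) k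
          = (n+k).choose k := by
      intro k hk
      rw [Finset.mem_range] at hk
      exact ihn k (by omega)
    rw [Finset.sum_congr rfl this, hockey2' n j]

lemma len_er (n : ℕ) :
    ((⇑(sig N d f m))^[n] (FreeMonoid.of (er N d))).length = if n = 0 then 1 else 0 := by
  cases n with
  | zero => simp [FreeMonoid.length_of]
  | succ n =>
    rw [Function.iterate_succ_apply, sig_of, show phi N d f m (er N d) = 1 from rfl,
      iter_one]
    simp [FreeMonoid.length_one]

lemma sig_replicate_er : ∀ k : ℕ,
    sig N d f m (FreeMonoid.ofList (List.replicate k (er N d))) = 1 := by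
  intro k
  induction k with
  | zero => exact map_one _
  | succ k ih =>
    rw [List.replicate_succ, FreeMonoid.ofList_cons, map_mul, sig_of,
      show phi N d f m (er N d) = 1 from rfl, ih, one_mul]

lemma len_core (hN : 1 ≤ N) (k : ℕ) :
    ((⇑(sig N d f m))^[k] (FreeMonoid.ofList (coreL N d m))).length
      = ∑ i ∈ range (d+1), m i * (k+i).choose i := by
  rw [len_iter_ofList]
  unfold coreL
  have hgen : ∀ L : List ℕ, (∀ i ∈ L, i ≤ d) →
      ((L.flatMap (fun i => List.replicate (m i) (aL N d i))).map
        (fun x => ((⇑(sig N d f m))^[k] (FreeMonoid.of x)).length)).sum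
      = (L.map (fun i => m i * (k+i).choose i)).sum := by
    intro L
    induction L with
    | nil => intro _; simp
    | cons x L ih =>
      intro hmem
      rw [List.flatMap_cons, List.map_append, List.sum_append, List.map_cons, List.sum_cons,
        ih (fun i hi => hmem i (List.mem_cons_of_mem _ hi)), List.map_replicate,
        List.sum_replicate, smul_eq_mul, len_a N d f m k x (hmem x (List.mem_cons_self))]
  rw [hgen (List.range (d+1)) (fun i hi => by
    rw [List.mem_range] at hi; omega), list_range_sum]

def wInit (hN : 1 ≤ N) : FreeMonoid (Alph N d) :=
  FreeMonoid.ofList (Sum.inl ⟨0, hN⟩ :: List.replicate (f 0 - 1) (er N d))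

lemma trans_step (hN : 1 ≤ N) : ∀ n : ℕ, ∀ h : n < N,
    (⇑(sig N d f m))^[n] (wInit N d f hN)
      = FreeMonoid.ofList (Sum.inl ⟨n, h⟩ :: List.replicate (f n - 1) (er N d)) := by
  intro n
  induction n with
  | zero => intro h; rfl
  | succ n ih =>
    intro h
    have hn : n < N := by omega
    rw [Function.iterate_succ_apply', ih hn, FreeMonoid.ofList_cons, map_mul, sig_of,
      sig_replicate_er, mul_one]
    have hphi : phi N d f m (Sum.inl ⟨n, hn⟩)
        = FreeMonoid.ofList (Sum.inl ⟨n+1, h⟩ :: List.replicate (f (n+1) - 1) (er N d)) := by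
      simp [phi, h]
    exact hphi

lemma at_N (hN : 1 ≤ N) :
    (⇑(sig N d f m))^[N] (wInit N d f hN) = FreeMonoid.ofList (coreL N d m) := by
  have h1 : N - 1 < N := by omega
  have hstep := Function.iterate_succ_apply' (⇑(sig N d f m)) (N-1) (wInit N d f hN)
  rw [show (N-1).succ = N from by omega] at hstep
  rw [hstep, trans_step N d f m hN (N-1) h1, FreeMonoid.ofList_cons, map_mul, sig_of,
    sig_replicate_er, mul_one]
  have hc : ¬ ((N-1) + 1 < N) := by omega
  simp [phi, hc]

end Constr


/-- A function `f : ℕ → ℝ` is a D0L-growth function if there is a D0L-system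
`(A, σ, w)` (with `A` a finite alphabet, `σ` a monoid morphism of the free
monoid over `A` into itself, and `w` a word over `A`) such that `f n` is the
length of `σⁿ(w)` for every `n`. -/
def IsD0LGrowth (f : ℕ → ℝ) : Prop :=
  ∃ (A : Type) (_ : Fintype A) (σ : FreeMonoid A →* FreeMonoid A) (w : FreeMonoid A),
    ∀ n : ℕ, f n = ((⇑σ)^[n] w).length

theorem stmt_0 (F : Polynomial ℝ)
    (hF : ∀ n : ℕ, ∃ m : ℕ, 0 < m ∧ F.eval (n : ℝ) = (m : ℝ)) :
    IsD0LGrowth (fun n : ℕ => F.eval (n : ℝ)) := by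
  classical
  choose f hfpos hfeq using hF
  have hpos : ∀ n, (1:ℤ) ≤ (f n : ℤ) := fun n => by exact_mod_cast hfpos n
  have heval : ∀ n : ℕ, F.eval (n:ℝ) = ((f n : ℤ) : ℝ) := fun n => by
    rw [hfeq n]; push_cast; ring
  obtain ⟨N, D, m, hN, hrep⟩ := part1 F.natDegree F (fun n => (f n : ℤ)) le_rfl heval hpos
  have hrepN : ∀ n, f (n + N) = ∑ i ∈ range (D+1), m i * (n+i).choose i := by
    intro n; have := hrep n; exact_mod_cast this
  refine ⟨Alph N D, inferInstance, sig N D f m, wInit N D f hN, fun n => ?_⟩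
  have hlen : ((⇑(sig N D f m))^[n] (wInit N D f hN)).length = f n := by
    rcases lt_or_ge n N with hn | hn
    · rw [trans_step N D f m hN n hn]
      have h1 := hfpos n
      show (Sum.inl ⟨n, hn⟩ :: List.replicate (f n - 1) (er N D)).length = f n
      simp
      omega
    · obtain ⟨k, rfl⟩ : ∃ k, n = k + N := ⟨n - N, by omega⟩
      rw [Function.iterate_add_apply, at_N N D f m hN, len_core N D f m hN k, hrepN k]
  simp only
  rw [hfeq n, hlen]
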